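/- Let Λ be the linear order of type ω + 1 + ω* (elements 0 ≤ 1 ≤ 2 ≤ ⋯ ≤ ∞ ≤ ⋯ ≤ 2′ ≤ 1′ ≤ 0′). Then Λ is order-isomorphic to the partially ordered set C(Λ,2) of Scott-continuous functions Λ → 2 ordered pointwise, via the map sending n ↦ ψ_n where ψ_n(x) = 1 iff x ∈ {(n−1)′, …, 1′, 0′}, sending ∞ ↦ ψ_∞ where ψ_∞(x) = 1 iff x = k′ for some k ∈ ℕ, and sending n′ ↦ ψ_{n′} where ψ_{n′}(x) = 1 iff x ≥ n with x ≠ m for m < n, i.e. ψ_{n′}(x) = 0 exactly for x ∈ {0, 1, …, n−1}. -/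

import Mathlib

def ScottCont {α β : Type*} [PartialOrder α] [PartialOrder β] (g : α → β) : Prop :=
  Monotone g ∧ ∀ c : ℕ → α, Monotone c → ∀ l, IsLUB (Set.range c) l →
    IsLUB (Set.range (g ∘ c)) (g l)

/-- `Λ`, the linear order of type `ω + 1 + ω*`:
elements `0 ≤ 1 ≤ ⋯ ≤ ∞ ≤ ⋯ ≤ 2′ ≤ 1′ ≤ 0′`, where the unprimed part together
with `∞ = ⊤` is `WithTop ℕ` and the primed part is `ℕᵒᵈ`. -/
abbrev Lam : Type := Lex ((WithTop ℕ) ⊕ ℕᵒᵈ)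

/-- The map `ψ`: for `n ∈ ℕ`, `ψ_n x = 1` iff `x ∈ {(n−1)′, …, 1′, 0′}`;
`ψ_∞ x = 1` iff `x = k′` for some `k`; for `n′`, `ψ_{n′} x = 0` exactly for
`x ∈ {0, …, n−1}`.  (The first two cases merge, since `↑k < ⊤` always holds.) -/
def psi (a x : Lam) : Bool :=
  match ofLex a, ofLex x with
  | Sum.inl _, Sum.inl _ => false
  | Sum.inl n, Sum.inr k => decide ((↑(OrderDual.ofDual k) : WithTop ℕ) < n)
  | Sum.inr m, Sum.inl j => decide ((↑(OrderDual.ofDual m) : WithTop ℕ) ≤ j)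
  | Sum.inr _, Sum.inr _ => true

namespace Stmt8Aux

open Sum OrderDual Function Set

abbrev A (j : WithTop ℕ) : Lam := toLex (Sum.inl j)
abbrev B (k : ℕ) : Lam := toLex (Sum.inr (toDual k))

lemma psiAA (n j : WithTop ℕ) : psi (A n) (A j) = false := rfl
lemma psiAB (n : WithTop ℕ) (k : ℕ) : psi (A n) (B k) = decide ((k : WithTop ℕ) < n) := rfl
lemma psiBA (m : ℕ) (j : WithTop ℕ) : psi (B m) (A j) = decide ((m : WithTop ℕ) ≤ j) := rfl
lemma psiBB (m k : ℕ) : psi (B m) (B k) = true := rfl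

lemma AleA {j j' : WithTop ℕ} : A j ≤ A j' ↔ j ≤ j' := Sum.Lex.inl_le_inl_iff
lemma AleB (j : WithTop ℕ) (k : ℕ) : A j ≤ B k := Sum.Lex.inl_le_inr _ _
lemma BleB {k k' : ℕ} : B k ≤ B k' ↔ k' ≤ k := by
  rw [show (B k ≤ B k') ↔ (toDual k ≤ toDual k') from Sum.Lex.inr_le_inr_iff]
  exact toDual_le_toDual
lemma not_BleA (k : ℕ) (j : WithTop ℕ) : ¬ B k ≤ A j := Sum.Lex.not_inr_le_inl

lemma cases_lam (x : Lam) : (∃ j, x = A j) ∨ (∃ k, x = B k) := by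
  obtain j | k := x
  · exact Or.inl ⟨j, rfl⟩
  · exact Or.inr ⟨ofDual k, rfl⟩

lemma cases_wt (j : WithTop ℕ) : j = ⊤ ∨ ∃ n : ℕ, j = ((n : ℕ) : WithTop ℕ) := by
  induction j using WithTop.recTopCoe with
  | top => exact Or.inl rfl
  | coe n => exact Or.inr ⟨n, rfl⟩

lemma castle {m k : ℕ} : ((m : ℕ) : WithTop ℕ) ≤ ((k : ℕ) : WithTop ℕ) ↔ m ≤ k := by
  exact_mod_cast Iff.rfl

lemma castlt {m k : ℕ} : ((m : ℕ) : WithTop ℕ) < ((k : ℕ) : WithTop ℕ) ↔ m < k := by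
  exact_mod_cast Iff.rfl

lemma psi_mono (a : Lam) : Monotone (psi a) := by
  intro x y hxy
  obtain ⟨j, rfl⟩ | ⟨k, rfl⟩ := cases_lam x <;>
    obtain ⟨j', rfl⟩ | ⟨k', rfl⟩ := cases_lam y <;>
    obtain ⟨n, rfl⟩ | ⟨m, rfl⟩ := cases_lam a
  · simp [psiAA]
  · rw [psiBA, psiBA, Bool.le_iff_imp]
    simp only [decide_eq_true_iff]
    exact fun h => h.trans (AleA.mp hxy)
  · exact Bool.false_le _
  · rw [psiBA, psiBB]; exact Bool.le_true _
  · exact absurd hxy (not_BleA _ _)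
  · exact absurd hxy (not_BleA _ _)
  · rw [psiAB, psiAB, Bool.le_iff_imp]
    simp only [decide_eq_true_iff]
    refine fun h => lt_of_le_of_lt ?_ h
    exact castle.mpr (BleB.mp hxy)
  · simp [psiBB]

lemma psi_mono_left {a b : Lam} (hab : a ≤ b) (x : Lam) : psi a x ≤ psi b x := by
  obtain ⟨j, rfl⟩ | ⟨k, rfl⟩ := cases_lam x <;>
    obtain ⟨n, rfl⟩ | ⟨m, rfl⟩ := cases_lam a <;>
    obtain ⟨n', rfl⟩ | ⟨m', rfl⟩ := cases_lam b
  · simp [psiAA]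
  · exact Bool.false_le _
  · exact absurd hab (not_BleA _ _)
  · rw [psiBA, psiBA, Bool.le_iff_imp]
    simp only [decide_eq_true_iff]
    refine fun h => le_trans ?_ h
    exact castle.mpr (BleB.mp hab)
  · rw [psiAB, psiAB, Bool.le_iff_imp]
    simp only [decide_eq_true_iff]
    exact fun h => lt_of_lt_of_le h (AleA.mp hab)
  · rw [psiBB]; exact Bool.le_true _
  · exact absurd hab (not_BleA _ _)
  · simp [psiBB]

/-- Either `psi a` is constantly true, or its false-set has a greatest element. -/
lemma psi_max (a : Lam) :
    (∀ x, psi a x = true) ∨ ∃ g, psi a g = false ∧ ∀ x, psi a x = false → x ≤ g := by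
  obtain ⟨n, rfl⟩ | ⟨m, rfl⟩ := cases_lam a
  · right
    obtain rfl | ⟨n, rfl⟩ := cases_wt n
    · refine ⟨A ⊤, rfl, fun x hx => ?_⟩
      obtain ⟨j, rfl⟩ | ⟨k, rfl⟩ := cases_lam x
      · exact AleA.mpr le_top
      · rw [psiAB] at hx
        simp only [decide_eq_false_iff_not, not_lt, top_le_iff] at hx
        exact absurd hx (WithTop.natCast_ne_top k)
    · refine ⟨B n, by rw [psiAB]; simp, fun x hx => ?_⟩
      obtain ⟨j, rfl⟩ | ⟨k, rfl⟩ := cases_lam x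
      · exact AleB _ _
      · rw [psiAB] at hx
        simp only [decide_eq_false_iff_not, not_lt] at hx
        exact BleB.mpr (castle.mp hx)
  · match m with
    | 0 =>
      left; intro x
      obtain ⟨j, rfl⟩ | ⟨k, rfl⟩ := cases_lam x
      · rw [psiBA]; simp
      · rfl
    | m + 1 =>
      right
      refine ⟨A (m : ℕ), by
        rw [psiBA]
        simp only [decide_eq_false_iff_not, not_le]
        exact castlt.mpr (Nat.lt_succ_self m), fun x hx => ?_⟩
      obtain ⟨j, rfl⟩ | ⟨k, rfl⟩ := cases_lam x
      · rw [psiBA] at hx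
        simp only [decide_eq_false_iff_not, not_le] at hx
        refine AleA.mpr ?_
        obtain rfl | ⟨j, rfl⟩ := cases_wt j
        · exact absurd hx (by simp)
        · exact castle.mpr (Nat.lt_succ_iff.mp (castlt.mp hx))
      · rw [psiBB] at hx; exact absurd hx (by simp)

lemma psi_scott (a : Lam) : ScottCont (psi a) := by
  refine ⟨psi_mono a, fun c hc l hl => ⟨?_, ?_⟩⟩
  · rintro _ ⟨n, rfl⟩
    exact psi_mono a (hl.1 (Set.mem_range_self n))
  · intro b hb
    by_cases hal : psi a l = true
    · rw [hal]
      have hbt : b = true := by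
        rcases psi_max a with h | ⟨g, hg, hmax⟩
        · have := hb (Set.mem_range_self 0)
          rw [Function.comp_apply, h (c 0)] at this
          exact Bool.le_iff_imp.mp this rfl
        · by_cases h1 : ∃ n, psi a (c n) = true
          · obtain ⟨n, hn⟩ := h1
            have := hb (Set.mem_range_self n)
            rw [Function.comp_apply, hn] at this
            exact Bool.le_iff_imp.mp this rfl
          · push_neg at h1
            exfalso
            have hub : g ∈ upperBounds (Set.range c) := by
              rintro _ ⟨n, rfl⟩
              exact hmax _ (Bool.not_eq_true _ ▸ h1 n)
            have := psi_mono a (hl.2 hub)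
            rw [hal, hg] at this
            exact absurd this (by simp)
      rw [hbt]
    · rw [Bool.not_eq_true] at hal
      rw [hal]
      exact Bool.false_le _

noncomputable def F : Lam → {f : Lam → Bool // ScottCont f} := fun a => ⟨psi a, psi_scott a⟩

lemma F_strictMono : StrictMono F := by
  intro a b hab
  rw [Subtype.mk_lt_mk, Pi.lt_def]
  refine ⟨fun x => psi_mono_left hab.le x, ?_⟩
  show ∃ x, psi a x < psi b x
  obtain ⟨n, rfl⟩ | ⟨m, rfl⟩ := cases_lam a <;> obtain ⟨n', rfl⟩ | ⟨m', rfl⟩ := cases_lam b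
  · have hnn' : n < n' := by
      rw [lt_iff_le_not_ge, AleA, AleA] at hab
      exact lt_of_le_not_ge hab.1 hab.2
    obtain rfl | ⟨m, rfl⟩ := cases_wt n
    · exact absurd hnn' (not_top_lt)
    · refine ⟨B m, ?_⟩
      rw [psiAB, psiAB, Bool.lt_iff]
      constructor
      · simp
      · simp only [decide_eq_true_iff]
        exact hnn'
  · refine ⟨A ⊤, ?_⟩
    rw [psiAA, psiBA]
    simp [Bool.lt_iff]
  · exact absurd hab.le (not_BleA _ _)
  · have hmm' : m' < m := by
      rw [lt_iff_le_not_ge, BleB, BleB] at hab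
      exact lt_of_le_not_ge hab.1 hab.2
    refine ⟨A (m' : ℕ), ?_⟩
    rw [psiBA, psiBA, Bool.lt_iff]
    constructor
    · simp only [decide_eq_false_iff_not, not_le]
      exact castlt.mpr hmm'
    · simp

lemma c_mono : Monotone (fun n : ℕ => A (n : ℕ)) := by
  intro i j hij
  exact AleA.mpr (castle.mpr hij)

lemma c_lub : IsLUB (Set.range (fun n : ℕ => A (n : ℕ))) (A ⊤) := by
  constructor
  · rintro _ ⟨n, rfl⟩
    exact AleA.mpr le_top
  · intro b hb
    obtain ⟨j, rfl⟩ | ⟨k, rfl⟩ := cases_lam b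
    · obtain rfl | ⟨j, rfl⟩ := cases_wt j
      · exact le_refl _
      · exfalso
        have := hb (Set.mem_range_self (j + 1))
        have h2 : j + 1 ≤ j := castle.mp (AleA.mp this)
        omega
    · exact AleB _ _

lemma F_surj : Function.Surjective F := by
  rintro ⟨f, hmono, hscott⟩
  have htop := hscott _ c_mono _ c_lub
  suffices h : ∃ a, ∀ x, psi a x = f x by
    obtain ⟨a, ha⟩ := h
    exact ⟨a, Subtype.ext (funext ha)⟩
  by_cases h1 : ∃ n : ℕ, f (A (n : ℕ)) = true
  · have hm := Nat.find_spec h1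
    set m := Nat.find h1 with hmdef
    refine ⟨B m, fun x => ?_⟩
    obtain ⟨j, rfl⟩ | ⟨k, rfl⟩ := cases_lam x
    · rw [psiBA]
      obtain rfl | ⟨j, rfl⟩ := cases_wt j
      · have h2 : f (A ⊤) = true :=
          Bool.le_iff_imp.mp (hmono (AleA.mpr le_top)) hm
        rw [h2]; simp
      · rcases le_or_gt m j with h | h
        · have h2 : f (A (j : ℕ)) = true :=
            Bool.le_iff_imp.mp (hmono (AleA.mpr (castle.mpr h))) hm
          rw [h2]
          simp only [decide_eq_true_eq]
          exact castle.mpr h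
        · have h2 : f (A (j : ℕ)) = false :=
            Bool.not_eq_true _ ▸ Nat.find_min h1 h
          rw [h2]
          simp only [decide_eq_false_iff_not, not_le]
          exact castlt.mpr h
    · rw [psiBB]
      exact (Bool.le_iff_imp.mp (hmono (AleB _ _)) hm).symm
  · push_neg at h1
    have hA : ∀ j : WithTop ℕ, f (A j) = false := by
      have htopfalse : f (A ⊤) = false := by
        have hle : f (A ⊤) ≤ false := htop.2 (by
          rintro _ ⟨n, rfl⟩
          simp only [Function.comp_apply]
          rw [Bool.eq_false_iff.mpr (h1 n)])
        revert hle; cases f (A ⊤) <;> simp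
      intro j
      obtain rfl | ⟨j, rfl⟩ := cases_wt j
      · exact htopfalse
      · exact Bool.not_eq_true _ ▸ h1 j
    by_cases h2 : ∃ k : ℕ, f (B k) = false
    · set N := Nat.find h2 with hNdef
      have hN := Nat.find_spec h2
      refine ⟨A (N : ℕ), fun x => ?_⟩
      obtain ⟨j, rfl⟩ | ⟨k, rfl⟩ := cases_lam x
      · rw [psiAA, hA]
      · rw [psiAB]
        rcases lt_or_ge k N with h | h
        · have h3 : f (B k) = true := by
            have := Nat.find_min h2 h
            simpa using this
          rw [h3]
          simp only [decide_eq_true_eq]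
          exact castlt.mpr h
        · have hle : f (B k) ≤ f (B N) := hmono (BleB.mpr h)
          rw [hN] at hle
          have h3 : f (B k) = false := by revert hle; cases f (B k) <;> simp
          rw [h3]
          simp only [decide_eq_false_iff_not, not_lt]
          exact castle.mpr h
    · push_neg at h2
      refine ⟨A ⊤, fun x => ?_⟩
      obtain ⟨j, rfl⟩ | ⟨k, rfl⟩ := cases_lam x
      · rw [psiAA, hA]
      · rw [psiAB, Bool.ne_false_iff.mp (h2 k)]
        simp only [decide_eq_true_eq]
        exact WithTop.coe_lt_top _

end Stmt8Aux

/-- `Λ` is order-isomorphic to `C(Λ,2)` ordered pointwise, via `a ↦ ψ_a`. -/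
theorem stmt_8 :
    ∃ e : Lam ≃o {f : Lam → Bool // ScottCont f},
      ∀ a x : Lam, (e a).1 x = psi a x := by
  refine ⟨StrictMono.orderIsoOfSurjective Stmt8Aux.F Stmt8Aux.F_strictMono Stmt8Aux.F_surj,
    fun a x => ?_⟩
  rw [StrictMono.coe_orderIsoOfSurjective]
  rfl
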